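/- The pushforward of the standard semicircle law w under the map x ↦ x² is equal to the Marchenko–Pastur law m; that is, w² = m as measures on ℝ. -/

import Mathlib

open MeasureTheory Real
open scoped ENNReal

/-- The standard semicircle law: density `(1/(2π)) √(4 − x²)` on `[−2, 2]`. -/
noncomputable def semicircle : Measure ℝ :=
  volume.withDensity (fun x =>
    ENNReal.ofReal (if x ∈ Set.Icc (-2) 2 then (1 / (2 * π)) * Real.sqrt (4 - x ^ 2) else 0))

/-- The Marchenko–Pastur (free Poisson) law: density `(1/(2π)) √((4 − x)/x)` on `(0, 4)`. -/
noncomputable def marchenkoPastur : Measure ℝ :=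
  volume.withDensity (fun x =>
    ENNReal.ofReal (if x ∈ Set.Ioo 0 4 then (1 / (2 * π)) * Real.sqrt ((4 - x) / x) else 0))

/-- The semicircle density. -/
noncomputable def scDens : ℝ → ℝ≥0∞ := fun x =>
  ENNReal.ofReal (if x ∈ Set.Icc (-2 : ℝ) 2 then (1 / (2 * π)) * Real.sqrt (4 - x ^ 2) else 0)

/-- The Marchenko–Pastur density. -/
noncomputable def mpDens : ℝ → ℝ≥0∞ := fun y =>
  ENNReal.ofReal (if y ∈ Set.Ioo (0 : ℝ) 4 then (1 / (2 * π)) * Real.sqrt ((4 - y) / y) else 0)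

lemma scDens_measurable : Measurable scDens := by
  apply ENNReal.measurable_ofReal.comp
  exact Measurable.ite measurableSet_Icc
    ((measurable_const.mul
      (Real.continuous_sqrt.measurable.comp
        (measurable_const.sub (measurable_id.pow_const 2))))) measurable_const

lemma mpDens_measurable : Measurable mpDens := by
  apply ENNReal.measurable_ofReal.comp
  exact Measurable.ite measurableSet_Ioo
    ((measurable_const.mul
      (Real.continuous_sqrt.measurable.comp
        ((measurable_const.sub measurable_id).div measurable_id)))) measurable_const

lemma lintegral_Iic_zero_comp_neg (h : ℝ → ℝ≥0∞) (hm : Measurable h) :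
    ∫⁻ x in Set.Iic (0 : ℝ), h x = ∫⁻ x in Set.Ici (0 : ℝ), h (-x) := by
  have hpre : (fun x : ℝ => -x) ⁻¹' Set.Iic 0 = Set.Ici 0 := by
    ext x; simp [neg_nonpos]
  calc ∫⁻ x in Set.Iic (0 : ℝ), h x
      = ∫⁻ x in Set.Iic (0 : ℝ), h x ∂(Measure.map (fun x : ℝ => -x) volume) := by
        rw [show (fun x : ℝ => -x) = (Neg.neg : ℝ → ℝ) from rfl, Measure.map_neg_eq_self]
    _ = ∫⁻ x in (fun x : ℝ => -x) ⁻¹' Set.Iic 0, h (-x) :=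
        setLIntegral_map measurableSet_Iic hm measurable_neg
    _ = ∫⁻ x in Set.Ici (0 : ℝ), h (-x) := by rw [hpre]

lemma lintegral_image_sq (s : Set ℝ) (hs : MeasurableSet s) {f f' : ℝ → ℝ}
    (hf' : ∀ x ∈ s, HasDerivWithinAt f (f' x) s x) (hf : Set.InjOn f s) (g : ℝ → ℝ≥0∞) :
    ∫⁻ x in f '' s, g x = ∫⁻ x in s, ENNReal.ofReal |f' x| * g (f x) := by
  simpa only [ContinuousLinearMap.det_toSpanSingleton] using
    MeasureTheory.lintegral_image_eq_lintegral_abs_det_fderiv_mul volume hs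
      (fun x hx => (hf' x hx).hasFDerivWithinAt) hf g

lemma sq_image_Ioi : (fun x : ℝ => x ^ 2) '' Set.Ioi 0 = Set.Ioi 0 := by
  ext y
  simp only [Set.mem_image, Set.mem_Ioi]
  constructor
  · rintro ⟨x, hx, rfl⟩; positivity
  · intro hy; exact ⟨Real.sqrt y, Real.sqrt_pos.mpr hy, Real.sq_sqrt hy.le⟩

lemma key_pointwise {x : ℝ} (hx : 0 < x) :
    ENNReal.ofReal |2 * x| * mpDens (x ^ 2) = 2 * scDens x := by
  have hπ : (0 : ℝ) < π := Real.pi_pos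
  rcases lt_trichotomy x 2 with h2 | h2 | h2
  · have hx2 : x ^ 2 ∈ Set.Ioo (0 : ℝ) 4 := ⟨by positivity, by nlinarith⟩
    have hxI : x ∈ Set.Icc (-2 : ℝ) 2 := ⟨by linarith, h2.le⟩
    have h4 : (0 : ℝ) ≤ 4 - x ^ 2 := by nlinarith
    rw [scDens, mpDens]
    simp only [if_pos hx2, if_pos hxI]
    rw [abs_of_pos (by linarith), Real.sqrt_div h4, Real.sqrt_sq hx.le,
      ← ENNReal.ofReal_mul (by positivity),
      show (2 : ℝ≥0∞) = ENNReal.ofReal 2 by norm_num,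
      ← ENNReal.ofReal_mul (by norm_num)]
    congr 1
    field_simp
  · subst h2
    rw [scDens, mpDens]
    norm_num [Set.mem_Ioo, Set.mem_Icc]
  · have hx2 : x ^ 2 ∉ Set.Ioo (0 : ℝ) 4 := by
      intro h; exact absurd h.2 (by nlinarith)
    have hxI : x ∉ Set.Icc (-2 : ℝ) 2 := by
      intro h; exact absurd h.2 (by linarith)
    rw [scDens, mpDens]
    simp only [if_neg hx2, if_neg hxI]
    simp

theorem semicircle_sq_eq_marchenkoPastur :
    Measure.map (fun x : ℝ => x ^ 2) semicircle = marchenkoPastur := by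
  have hφ : Measurable (fun x : ℝ => x ^ 2) := measurable_id.pow_const 2
  ext s hs
  rw [Measure.map_apply hφ hs]
  have hls : semicircle ((fun x : ℝ => x ^ 2) ⁻¹' s) =
      ∫⁻ x in (fun x : ℝ => x ^ 2) ⁻¹' s, scDens x := by
    rw [semicircle, withDensity_apply _ (hs.preimage hφ)]; rfl
  have hrs : marchenkoPastur s = ∫⁻ y in s, mpDens y := by
    rw [marchenkoPastur, withDensity_apply _ hs]; rfl
  rw [hls, hrs]
  set T : Set ℝ := (fun x : ℝ => x ^ 2) ⁻¹' s with hT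
  have hTm : MeasurableSet T := hs.preimage hφ
  -- indicator forms
  have hTF : Measurable (T.indicator scDens) := scDens_measurable.indicator hTm
  have hsG : Measurable (s.indicator mpDens) := mpDens_measurable.indicator hs
  -- RHS: reduce to Ioi 0
  have hG0 : ∀ y ∈ Set.Iic (0 : ℝ), s.indicator mpDens y = 0 := by
    intro y hy
    have : mpDens y = 0 := by
      rw [mpDens, if_neg (fun h => absurd h.1 (not_lt.mpr hy))]
      simp
    by_cases h : y ∈ s <;> simp [Set.indicator, h, this]
  have hRHS : ∫⁻ y in s, mpDens y = ∫⁻ y in Set.Ioi (0 : ℝ), s.indicator mpDens y := by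
    rw [← lintegral_indicator hs _, ← lintegral_add_compl _ (measurableSet_Ioi (a := (0 : ℝ)))]
    have : ∫⁻ y in (Set.Ioi (0 : ℝ))ᶜ, s.indicator mpDens y = 0 := by
      rw [Set.compl_Ioi]
      rw [setLIntegral_congr_fun measurableSet_Iic hG0]
      simp
    rw [this, add_zero]
  -- change of variables on Ioi 0
  have hderiv : ∀ x ∈ Set.Ioi (0 : ℝ),
      HasDerivWithinAt (fun x : ℝ => x ^ 2) (2 * x) (Set.Ioi 0) x := by
    intro x _
    simpa using (hasDerivAt_pow 2 x).hasDerivWithinAt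
  have hinj : Set.InjOn (fun x : ℝ => x ^ 2) (Set.Ioi 0) := by
    intro a ha b hb h
    have := congrArg Real.sqrt h
    rwa [Real.sqrt_sq (le_of_lt ha), Real.sqrt_sq (le_of_lt hb)] at this
  have hsub : ∫⁻ y in Set.Ioi (0 : ℝ), s.indicator mpDens y
      = ∫⁻ x in Set.Ioi (0 : ℝ), ENNReal.ofReal |2 * x| * s.indicator mpDens (x ^ 2) := by
    have h := lintegral_image_sq (Set.Ioi 0) measurableSet_Ioi hderiv hinj (s.indicator mpDens)
    rwa [sq_image_Ioi] at h
  -- pointwise identification on Ioi 0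
  have hpt : ∀ x ∈ Set.Ioi (0 : ℝ),
      ENNReal.ofReal |2 * x| * s.indicator mpDens (x ^ 2) = 2 * T.indicator scDens x := by
    intro x hx
    by_cases h : x ^ 2 ∈ s
    · have hxT : x ∈ T := h
      rw [Set.indicator_of_mem h, Set.indicator_of_mem hxT]
      exact key_pointwise hx
    · have hxT : x ∉ T := h
      rw [Set.indicator_of_notMem h, Set.indicator_of_notMem hxT]
      simp
  -- LHS: symmetrize
  have heven : ∀ x : ℝ, T.indicator scDens (-x) = T.indicator scDens x := by
    intro x
    have hmem : (-x ∈ T) ↔ (x ∈ T) := by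
      have hnx : (-x) ^ 2 = x ^ 2 := neg_sq x
      simp only [hT, Set.mem_preimage, hnx]
    have hFeq : scDens (-x) = scDens x := by
      rw [scDens]
      simp only [neg_sq]
      congr 1
      by_cases hI : x ∈ Set.Icc (-2 : ℝ) 2
      · have hI' : -x ∈ Set.Icc (-2 : ℝ) 2 := ⟨by linarith [hI.2], by linarith [hI.1]⟩
        rw [if_pos hI, if_pos hI']
      · have hI' : -x ∉ Set.Icc (-2 : ℝ) 2 := by
          intro h; exact hI ⟨by linarith [h.2], by linarith [h.1]⟩
        rw [if_neg hI, if_neg hI']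
    by_cases h : x ∈ T
    · rw [Set.indicator_of_mem (hmem.mpr h), Set.indicator_of_mem h, hFeq]
    · rw [Set.indicator_of_notMem (fun hc => h (hmem.mp hc)), Set.indicator_of_notMem h]
  have hLHS : ∫⁻ x in T, scDens x = 2 * ∫⁻ x in Set.Ioi (0 : ℝ), T.indicator scDens x := by
    rw [← lintegral_indicator hTm _, ← lintegral_add_compl _ (measurableSet_Ioi (a := (0 : ℝ)))]
    have hneg : ∫⁻ x in (Set.Ioi (0 : ℝ))ᶜ, T.indicator scDens x
        = ∫⁻ x in Set.Ioi (0 : ℝ), T.indicator scDens x := by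
      rw [Set.compl_Ioi, lintegral_Iic_zero_comp_neg _ hTF]
      simp_rw [heven]
      exact (setLIntegral_congr Ioi_ae_eq_Ici).symm
    rw [hneg, two_mul]
  rw [hLHS, hRHS, hsub, setLIntegral_congr_fun measurableSet_Ioi hpt,
    lintegral_const_mul 2 hTF]
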